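/- In the groupoid (F_p × F_p, *), the number of square roots of the left unit is exactly p - 1, i.e., the set S(p) = { x ∈ F_p × F_p : x * x = 1_* } has cardinality p - 1, where 1_* = (1/b7 - a3/a8, 1/a8 - b2/b7). -/

import Mathlib

/-- The entropoid multiplication on `F_p × F_p`. -/
def emul {p : ℕ} [Fact p.Prime] (a3 a8 b2 b7 : ZMod p)
    (x y : ZMod p × ZMod p) : ZMod p × ZMod p :=
  (a3 * (a8 * b2 - b7) / (a8 * b7) + a3 * x.2 + a8 * b2 * y.1 / b7 + a8 * x.2 * y.1,
   -(b2 * (a8 - a3 * b7)) / (a8 * b7) + a3 * b7 * y.2 / a8 + b2 * x.1 + b7 * x.1 * y.2)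

theorem entropoid_card_sqrt_left_unit {p : ℕ} [Fact p.Prime] (a3 a8 b2 b7 : ZMod p)
    (ha8 : a8 ≠ 0) (hb7 : b7 ≠ 0) :
    Fintype.card {x : ZMod p × ZMod p //
        emul a3 a8 b2 b7 x x = (1 / b7 - a3 / a8, 1 / a8 - b2 / b7)} = p - 1 := by
  have key : ∀ x : ZMod p × ZMod p,
      emul a3 a8 b2 b7 x x = (1 / b7 - a3 / a8, 1 / a8 - b2 / b7) ↔
      (a8 * x.1 + a3) * (b7 * x.2 + b2) = 1 := by
    rintro ⟨x1, x2⟩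
    have id1 : a3 * (a8 * b2 - b7) / (a8 * b7) + a3 * x2 + a8 * b2 * x1 / b7 + a8 * x2 * x1 =
        ((a8 * x1 + a3) * (b7 * x2 + b2) - 1) / b7 + (1 / b7 - a3 / a8) := by
      field_simp
      ring
    have id2 : -(b2 * (a8 - a3 * b7)) / (a8 * b7) + a3 * b7 * x2 / a8 + b2 * x1 + b7 * x1 * x2 =
        ((a8 * x1 + a3) * (b7 * x2 + b2) - 1) / a8 + (1 / a8 - b2 / b7) := by
      field_simp
      ring
    rw [emul, Prod.ext_iff]
    simp only
    rw [id1, id2]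
    constructor
    · rintro ⟨h1, -⟩
      have h0 := add_eq_right.mp h1
      rcases div_eq_zero_iff.mp h0 with h | h
      · exact sub_eq_zero.mp h
      · exact absurd h hb7
    · intro h
      rw [h]
      simp
  have e : {x : ZMod p × ZMod p //
      emul a3 a8 b2 b7 x x = (1 / b7 - a3 / a8, 1 / a8 - b2 / b7)} ≃ (ZMod p)ˣ :=
    { toFun := fun x => Units.mkOfMulEqOne (a8 * x.1.1 + a3) (b7 * x.1.2 + b2)
        ((key x.1).mp x.2)
      invFun := fun u => ⟨(((u : ZMod p) - a3) / a8, (((u⁻¹ : (ZMod p)ˣ) : ZMod p) - b2) / b7),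
        by
          rw [key]
          have h1 : a8 * (((u : ZMod p) - a3) / a8) + a3 = (u : ZMod p) := by field_simp; ring
          have h2 : b7 * ((((u⁻¹ : (ZMod p)ˣ) : ZMod p) - b2) / b7) + b2 =
              ((u⁻¹ : (ZMod p)ˣ) : ZMod p) := by
            rw [mul_comm, div_mul_cancel₀ _ hb7, sub_add_cancel]
          show (a8 * (((u : ZMod p) - a3) / a8) + a3) *
              (b7 * ((((u⁻¹ : (ZMod p)ˣ) : ZMod p) - b2) / b7) + b2) = 1
          rw [h1, h2]
          exact u.mul_inv⟩
      left_inv := fun x => by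
        apply Subtype.ext
        apply Prod.ext
        · show (a8 * x.1.1 + a3 - a3) / a8 = x.1.1
          field_simp
          ring
        · show (b7 * x.1.2 + b2 - b2) / b7 = x.1.2
          field_simp
          ring
      right_inv := fun u => by
        apply Units.ext
        show a8 * (((u : ZMod p) - a3) / a8) + a3 = (u : ZMod p)
        field_simp
        ring }
  rw [Fintype.card_congr e, ZMod.card_units_eq_totient, Nat.totient_prime (Fact.out)]
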